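/- Let ((Aₙ),(Ψₙ)) be a Parseval factorable weak operator-valued frame in B(H,H₀) such that θ_A(H) = θ_Ψ(H) and P_{A,Ψ} := θ_A S_{A,Ψ}⁻¹ θ_Ψ* is an orthogonal projection. Let K := θ_A(H)^⊥ ⊆ ℓ²(ℕ,H₀) and H₁ := H ⊕ K. Then there exist bounded linear operators Bₙ, Φₙ : H₁ → H₀ (n ∈ ℕ) such that ((Bₙ),(Φₙ)) is an orthonormal OVF in B(H₁,H₀) and Bₙ(h ⊕ 0) = Aₙ h, Φₙ(h ⊕ 0) = Ψₙ h for all h ∈ H and all n ∈ ℕ. (In particular, h ↦ h ⊕ 0 is an isometric embedding of H into H₁.) -/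

import Mathlib

noncomputable section

open ContinuousLinearMap Filter

variable {H H₀ : Type*} [NormedAddCommGroup H] [InnerProductSpace ℂ H] [CompleteSpace H]
  [NormedAddCommGroup H₀] [InnerProductSpace ℂ H₀] [CompleteSpace H₀]

/-- `ℓ²(I, H₀)`: square-summable `H₀`-valued families indexed by `I`. -/
abbrev l2 (I : Type*) (H₀ : Type*) [NormedAddCommGroup H₀] : Type _ :=
  lp (fun _ : I => H₀) 2

/-- The isometry `Lᵢ : H₀ → ℓ²(I,H₀)` sending `h` to the family equal to `h` at index `i`
and `0` elsewhere. -/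
def Lop {I : Type*} [DecidableEq I] (i : I) : H₀ →L[ℂ] l2 I H₀ :=
  LinearMap.mkContinuous
    { toFun := fun h => lp.single 2 i h
      map_add' := by
        intro a b
        apply lp.ext
        funext j
        by_cases hj : j = i
        · subst hj; simp [lp.single_apply_self]
        · simp [lp.single_apply_ne _ _ _ hj, lp.coeFn_add]
      map_smul' := by
        intro c a
        simp [lp.single_smul] }
    1
    (by
      intro h
      simpa using (lp.norm_single (p := 2) (by norm_num) (fun _ : I => h) i).le)

/-- Convergence of the sequence of partial sums `∑_{n < m} f n` to `x` as `m → ∞`. -/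
def SeqSum {E : Type*} [AddCommMonoid E] [TopologicalSpace E] (f : ℕ → E) (x : E) : Prop :=
  Tendsto (fun m => ∑ n ∈ Finset.range m, f n) atTop (nhds x)

set_option linter.unusedSectionVars false

def evCLM (n : ℕ) : l2 ℕ H₀ →L[ℂ] H₀ :=
  LinearMap.mkContinuous
    { toFun := fun f => f n
      map_add' := fun f g => congrFun (lp.coeFn_add f g) n
      map_smul' := fun c f => congrFun (lp.coeFn_smul c f) n }
    1
    (fun f => by simpa using lp.norm_apply_le_norm (by norm_num) f n)

lemma evCLM_sum_single (f : ℕ → H₀) (m n : ℕ) (hn : n < m) :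
    evCLM n (∑ k ∈ Finset.range m, Lop k (f k)) = f n := by
  have : evCLM n (∑ k ∈ Finset.range m, Lop k (f k))
      = (↑(∑ k ∈ Finset.range m, lp.single (E := fun _ : ℕ => H₀) 2 k (f k)) : ℕ → H₀) n := rfl
  rw [this]
  simp only [lp.coeFn_sum, lp.single_apply, Finset.sum_apply, Finset.sum_dite_eq]
  simp [Finset.mem_range.mpr hn]

lemma coord_of_seqsum {f : ℕ → H₀} {y : l2 ℕ H₀}
    (hy : SeqSum (fun n => Lop n (f n)) y) (n : ℕ) : y n = f n := by
  have h1 : Tendsto (fun m => evCLM n (∑ k ∈ Finset.range m, Lop k (f k))) atTop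
      (nhds (evCLM n y)) := ((evCLM n).continuous.tendsto y).comp hy
  have h2 : Tendsto (fun m => evCLM n (∑ k ∈ Finset.range m, Lop k (f k))) atTop
      (nhds (f n)) := by
    refine Filter.Tendsto.congr' ?_ tendsto_const_nhds
    filter_upwards [eventually_gt_atTop n] with m hm
    exact (evCLM_sum_single f m n hm).symm
  exact tendsto_nhds_unique h1 h2

lemma seqsum_trunc (y : l2 ℕ H₀) : SeqSum (fun n => Lop n (y n)) y :=
  (lp.hasSum_single ENNReal.ofNat_ne_top y).tendsto_sum_nat

lemma seqSum_add {E : Type*} [AddCommMonoid E] [TopologicalSpace E] [ContinuousAdd E]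
    {f g : ℕ → E} {x y : E} (hf : SeqSum f x) (hg : SeqSum g y) :
    SeqSum (fun n => f n + g n) (x + y) := by
  have := Filter.Tendsto.add hf hg
  simpa [SeqSum, Finset.sum_add_distrib] using this

open InnerProductSpace in
lemma inner_theta {A Ψ : ℕ → H →L[ℂ] H₀} {θA θΨ : H →L[ℂ] l2 ℕ H₀}
    (hθA : ∀ h : H, SeqSum (fun n => Lop n (A n h)) (θA h))
    (hθΨ : ∀ h : H, SeqSum (fun n => Lop n (Ψ n h)) (θΨ h))
    (hParseval : ∀ h : H, SeqSum (fun n => adjoint (Ψ n) (A n h)) h)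
    (z h : H) : (inner ℂ (θΨ z) (θA h) : ℂ) = inner ℂ z h := by
  have hsum : HasSum (fun n => (inner ℂ ((θΨ z : ℕ → H₀) n) ((θA h : ℕ → H₀) n) : ℂ))
      (inner ℂ (θΨ z) (θA h)) := lp.hasSum_inner (𝕜 := ℂ) (θΨ z) (θA h)
  have h1 : Tendsto (fun m => ∑ n ∈ Finset.range m,
      (inner ℂ ((θΨ z : ℕ → H₀) n) ((θA h : ℕ → H₀) n) : ℂ)) atTop
      (nhds (inner ℂ (θΨ z) (θA h))) := hsum.tendsto_sum_nat
  have h2 : Tendsto (fun m => ∑ n ∈ Finset.range m,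
      (inner ℂ ((θΨ z : ℕ → H₀) n) ((θA h : ℕ → H₀) n) : ℂ)) atTop (nhds (inner ℂ z h)) := by
    have h3 : Tendsto (fun m => (inner ℂ z (∑ n ∈ Finset.range m, adjoint (Ψ n) (A n h)) : ℂ))
        atTop (nhds (inner ℂ z h)) := Filter.Tendsto.inner tendsto_const_nhds (hParseval h)
    refine h3.congr fun m => ?_
    rw [inner_sum]
    refine Finset.sum_congr rfl fun n _ => ?_
    rw [ContinuousLinearMap.adjoint_inner_right, coord_of_seqsum (hθΨ z) n,
      coord_of_seqsum (hθA h) n]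
  exact tendsto_nhds_unique h1 h2

set_option maxHeartbeats 1000000 in
set_option synthInstance.maxHeartbeats 400000 in
set_option maxHeartbeats 1000000 in
set_option synthInstance.maxHeartbeats 400000 in
/-- Dilation of a Parseval factorable weak OVF with `θ_A(H) = θ_Ψ(H)` and
`P_{A,Ψ}` an orthogonal projection, to an orthonormal OVF on `H₁ = H ⊕ θ_A(H)^⊥`. -/
theorem stmt5
    (A Ψ : ℕ → H →L[ℂ] H₀)
    (θA θΨ : H →L[ℂ] l2 ℕ H₀)
    (hθA : ∀ h : H, SeqSum (fun n => Lop n (A n h)) (θA h))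
    (hθΨ : ∀ h : H, SeqSum (fun n => Lop n (Ψ n h)) (θΨ h))
    (hParseval : ∀ h : H, SeqSum (fun n => adjoint (Ψ n) (A n h)) h)
    (hrange : Set.range θA = Set.range θΨ)
    (hproj : IsSelfAdjoint (θA ∘L adjoint θΨ)) :
    ∃ (B Φ : ℕ → WithLp 2 (H × ↥(LinearMap.range (θA : H →ₗ[ℂ] l2 ℕ H₀))ᗮ) →L[ℂ] H₀)
      (θB θΦ : WithLp 2 (H × ↥(LinearMap.range (θA : H →ₗ[ℂ] l2 ℕ H₀))ᗮ) →L[ℂ] l2 ℕ H₀),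
      -- ((Bₙ),(Φₙ)) is factorable
      (∀ x, SeqSum (fun n => Lop n (B n x)) (θB x)) ∧
      (∀ x, SeqSum (fun n => Lop n (Φ n x)) (θΦ x)) ∧
      -- and an orthonormal OVF: Parseval and Riesz
      adjoint θΦ ∘L θB = 1 ∧
      θB ∘L adjoint θΦ = 1 ∧
      -- the restrictions to `H` are the original operators
      (∀ (n : ℕ) (h : H),
        B n ((WithLp.equiv 2 (H × ↥(LinearMap.range (θA : H →ₗ[ℂ] l2 ℕ H₀))ᗮ)).symm (h, 0)) = A n h) ∧
      (∀ (n : ℕ) (h : H),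
        Φ n ((WithLp.equiv 2 (H × ↥(LinearMap.range (θA : H →ₗ[ℂ] l2 ℕ H₀))ᗮ)).symm (h, 0)) = Ψ n h) ∧
      -- `h ↦ h ⊕ 0` is an isometric embedding
      (∀ h : H,
        ‖(WithLp.equiv 2 (H × ↥(LinearMap.range (θA : H →ₗ[ℂ] l2 ℕ H₀))ᗮ)).symm (h, 0)‖ = ‖h‖) := by
  classical
  set K : Submodule ℂ (l2 ℕ H₀) := (LinearMap.range (θA : H →ₗ[ℂ] l2 ℕ H₀))ᗮ with hKdef
  haveI hKc : CompleteSpace ↥K := Submodule.instOrthogonalCompleteSpace _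
  let e : WithLp 2 (H × ↥K) ≃L[ℂ] H × ↥K := WithLp.prodContinuousLinearEquiv 2 ℂ H ↥K
  let fstL : WithLp 2 (H × ↥K) →L[ℂ] H :=
    (ContinuousLinearMap.fst ℂ H ↥K).comp e.toContinuousLinearMap
  let sndL : WithLp 2 (H × ↥K) →L[ℂ] ↥K :=
    (ContinuousLinearMap.snd ℂ H ↥K).comp e.toContinuousLinearMap
  let ι : ↥K →L[ℂ] l2 ℕ H₀ := K.subtypeL
  let θB : WithLp 2 (H × ↥K) →L[ℂ] l2 ℕ H₀ := θA ∘L fstL + ι ∘L sndL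
  let θΦ : WithLp 2 (H × ↥K) →L[ℂ] l2 ℕ H₀ := θΨ ∘L fstL + ι ∘L sndL
  let B : ℕ → WithLp 2 (H × ↥K) →L[ℂ] H₀ :=
    fun n => (A n) ∘L fstL + (evCLM n) ∘L (ι ∘L sndL)
  let Φ : ℕ → WithLp 2 (H × ↥K) →L[ℂ] H₀ :=
    fun n => (Ψ n) ∘L fstL + (evCLM n) ∘L (ι ∘L sndL)
  -- basic facts
  have hinner : ∀ z h : H, (inner ℂ (θΨ z) (θA h) : ℂ) = inner ℂ z h :=
    inner_theta hθA hθΨ hParseval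
  have hadjΨA : ∀ h : H, adjoint θΨ (θA h) = h := by
    intro h
    refine ext_inner_left ℂ fun z => ?_
    rw [ContinuousLinearMap.adjoint_inner_right]
    exact hinner z h
  have hΨrange : ∀ z : H, θΨ z ∈ LinearMap.range (θA : H →ₗ[ℂ] l2 ℕ H₀) := by
    intro z
    have h1 : θΨ z ∈ Set.range ⇑θΨ := ⟨z, rfl⟩
    rw [← hrange] at h1
    obtain ⟨w, hw⟩ := h1
    exact ⟨w, hw⟩
  have hKorth : ∀ (k : ↥K) (u : l2 ℕ H₀), u ∈ LinearMap.range (θA : H →ₗ[ℂ] l2 ℕ H₀) →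
      (inner ℂ u (k : l2 ℕ H₀) : ℂ) = 0 := fun k u hu =>
    (Submodule.mem_orthogonal _ _).1 k.2 u hu
  have hKorth' : ∀ (k : ↥K) (u : l2 ℕ H₀), u ∈ LinearMap.range (θA : H →ₗ[ℂ] l2 ℕ H₀) →
      (inner ℂ (k : l2 ℕ H₀) u : ℂ) = 0 := by
    intro k u hu
    rw [← inner_conj_symm, hKorth k u hu, map_zero]
  have hPadj : adjoint (θA ∘L adjoint θΨ) = θA ∘L adjoint θΨ := hproj.adjoint_eq
  have hPθA : ∀ h : H, (θA ∘L adjoint θΨ) (θA h) = θA h := by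
    intro h
    rw [ContinuousLinearMap.comp_apply, hadjΨA]
  have hproj_eq : ∀ y : l2 ℕ H₀,
      ((K.orthogonalProjectionOnto y : l2 ℕ H₀)) = y - θA (adjoint θΨ y) := by
    intro y
    refine K.eq_starProjection_of_mem_of_inner_eq_zero ?_ ?_
    · refine (Submodule.mem_orthogonal _ _).2 ?_
      rintro u ⟨h, rfl⟩
      have h1 : (inner ℂ (θA h) (θA (adjoint θΨ y)) : ℂ) = inner ℂ (θA h) y := by
        have h2 := ContinuousLinearMap.adjoint_inner_left (θA ∘L adjoint θΨ) (θA h) y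
        rw [hPadj, hPθA h] at h2
        have h4 := congrArg (starRingEnd ℂ) h2
        rw [inner_conj_symm, inner_conj_symm] at h4
        exact h4
      rw [inner_sub_right]
      exact sub_eq_zero.mpr h1.symm
    · intro w hw
      have h1 : y - (y - θA (adjoint θΨ y)) = θA (adjoint θΨ y) := by abel
      rw [h1]
      exact (Submodule.mem_orthogonal _ _).1 hw _ (LinearMap.mem_range_self _ _)
  let T : l2 ℕ H₀ →L[ℂ] WithLp 2 (H × ↥K) :=
    e.symm.toContinuousLinearMap ∘L ((adjoint θΨ).prod (K.orthogonalProjectionOnto))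
  have hadjΦ : adjoint θΦ = T := by
    symm
    rw [ContinuousLinearMap.eq_adjoint_iff]
    intro x y
    have hTx1 : fstL (T x) = adjoint θΨ x := rfl
    have hTx2 : sndL (T x) = K.orthogonalProjectionOnto x := rfl
    have hL : (inner ℂ (T x) y : ℂ)
        = inner ℂ (adjoint θΨ x) (fstL y) + inner ℂ (K.orthogonalProjectionOnto x) (sndL y) := by
      rw [WithLp.prod_inner_apply]
      rfl
    have hR : (inner ℂ x (θΦ y) : ℂ)
        = inner ℂ x (θΨ (fstL y)) + inner ℂ x ((sndL y : l2 ℕ H₀)) := by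
      have : θΦ y = θΨ (fstL y) + ((sndL y : l2 ℕ H₀)) := rfl
      rw [this, inner_add_right]
    rw [hL, hR, ContinuousLinearMap.adjoint_inner_left]
    congr 1
    have h2 : (inner ℂ (K.orthogonalProjectionOnto x) (sndL y) : ℂ)
        = inner ℂ ((K.orthogonalProjectionOnto x : l2 ℕ H₀)) ((sndL y : l2 ℕ H₀)) := rfl
    rw [h2]
    have h3 := K.starProjection_inner_eq_zero x ((sndL y : l2 ℕ H₀)) (sndL y).2
    rw [inner_sub_left, sub_eq_zero] at h3
    exact h3.symm
  have hBapp : ∀ x, θB x = θA (fstL x) + (sndL x : l2 ℕ H₀) := fun x => rfl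
  have hΦapp : ∀ x, θΦ x = θΨ (fstL x) + (sndL x : l2 ℕ H₀) := fun x => rfl
  refine ⟨B, Φ, θB, θΦ, ?_, ?_, ?_, ?_, ?_, ?_, ?_⟩
  · intro x
    have h1 := seqSum_add (hθA (fstL x)) (seqsum_trunc ((sndL x : l2 ℕ H₀)))
    have h2 : ∀ n, Lop n (A n (fstL x)) + Lop n ((sndL x : l2 ℕ H₀) n) = Lop n (B n x) := by
      intro n
      rw [← map_add]
      rfl
    rw [hBapp]
    exact Filter.Tendsto.congr
      (fun m => Finset.sum_congr rfl fun n _ => h2 n) h1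
  · intro x
    have h1 := seqSum_add (hθΨ (fstL x)) (seqsum_trunc ((sndL x : l2 ℕ H₀)))
    have h2 : ∀ n, Lop n (Ψ n (fstL x)) + Lop n ((sndL x : l2 ℕ H₀) n) = Lop n (Φ n x) := by
      intro n
      rw [← map_add]
      rfl
    rw [hΦapp]
    exact Filter.Tendsto.congr
      (fun m => Finset.sum_congr rfl fun n _ => h2 n) h1
  · refine ContinuousLinearMap.ext fun x => ?_
    refine ext_inner_left ℂ fun z => ?_
    rw [ContinuousLinearMap.comp_apply, ContinuousLinearMap.one_apply,
      ContinuousLinearMap.adjoint_inner_right, hBapp, hΦapp]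
    rw [inner_add_left, inner_add_right, inner_add_right]
    have e1 : (inner ℂ (θΨ (fstL z)) (θA (fstL x)) : ℂ) = inner ℂ (fstL z) (fstL x) :=
      hinner _ _
    have e2 : (inner ℂ (θΨ (fstL z)) ((sndL x : l2 ℕ H₀)) : ℂ) = 0 :=
      hKorth (sndL x) _ (hΨrange (fstL z))
    have e3 : (inner ℂ ((sndL z : l2 ℕ H₀)) (θA (fstL x)) : ℂ) = 0 :=
      hKorth' (sndL z) _ (LinearMap.mem_range_self _ _)
    have e4 : (inner ℂ ((sndL z : l2 ℕ H₀)) ((sndL x : l2 ℕ H₀)) : ℂ)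
        = inner ℂ (sndL z) (sndL x) := rfl
    rw [e1, e2, e3, e4]
    rw [WithLp.prod_inner_apply]
    simp only [add_zero, zero_add]
    rfl
  · refine ContinuousLinearMap.ext fun y => ?_
    rw [ContinuousLinearMap.comp_apply, hadjΦ, ContinuousLinearMap.one_apply]
    have h1 : θB (T y) = θA (adjoint θΨ y) + ((K.orthogonalProjectionOnto y : l2 ℕ H₀)) := rfl
    rw [h1, hproj_eq y]
    abel
  · intro n h
    show B n ((WithLp.equiv 2 (H × ↥K)).symm (h, 0)) = A n h
    have hb : ∀ x, B n x = A n (fstL x) + evCLM n ((sndL x : l2 ℕ H₀)) := fun _ => rfl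
    rw [hb]
    have h1 : fstL ((WithLp.equiv 2 (H × ↥K)).symm (h, 0)) = h := rfl
    have h2 : sndL ((WithLp.equiv 2 (H × ↥K)).symm (h, 0)) = 0 := rfl
    rw [h1, h2]
    simp
  · intro n h
    show Φ n ((WithLp.equiv 2 (H × ↥K)).symm (h, 0)) = Ψ n h
    have hb : ∀ x, Φ n x = Ψ n (fstL x) + evCLM n ((sndL x : l2 ℕ H₀)) := fun _ => rfl
    rw [hb]
    have h1 : fstL ((WithLp.equiv 2 (H × ↥K)).symm (h, 0)) = h := rfl
    have h2 : sndL ((WithLp.equiv 2 (H × ↥K)).symm (h, 0)) = 0 := rfl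
    rw [h1, h2]
    simp
  · intro h
    rw [WithLp.prod_norm_eq_of_L2]
    simp [Real.sqrt_sq (norm_nonneg h)]
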